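/- Let R, C be n×n positive definite matrices, let a, b ≥ 0, and let 0 ≤ c ≤ 2ab. Then the eigenvalue vector of a²R^{-1}CR^{-1} + b²RCR + cC is weakly majorized by the eigenvalue vector of (aR^{-1} + bR) C (aR^{-1} + bR). Moreover, if c = 2ab, the weak majorization is a majorization. -/

import Mathlib

open Matrix ComplexOrder

namespace Matrix.PosSemidef

/-- Restored from the older Mathlib (removed upstream), with its old definition. -/
noncomputable def sqrt {m : Type*} [Fintype m] [DecidableEq m] {𝕜 : Type*} [RCLike 𝕜]
    {A : Matrix m m 𝕜} (hA : A.PosSemidef) : Matrix m m 𝕜 :=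
  hA.1.eigenvectorUnitary.1 * diagonal ((↑) ∘ (√·) ∘ hA.1.eigenvalues) *
    (star hA.1.eigenvectorUnitary : Matrix m m 𝕜)

lemma posSemidef_sqrt {m : Type*} [Fintype m] [DecidableEq m] {𝕜 : Type*} [RCLike 𝕜]
    {A : Matrix m m 𝕜} (hA : A.PosSemidef) : hA.sqrt.PosSemidef := by
  have hd : (diagonal ((↑) ∘ (√·) ∘ hA.1.eigenvalues) : Matrix m m 𝕜).PosSemidef :=
    posSemidef_diagonal_iff.mpr fun i => by
      simp only [Function.comp_apply, RCLike.ofReal_nonneg]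
      exact Real.sqrt_nonneg _
  have h := hd.mul_mul_conjTranspose_same (hA.1.eigenvectorUnitary : Matrix m m 𝕜)
  unfold sqrt
  exact h

end Matrix.PosSemidef

lemma Matrix.PosSemidef.sqrt_mul_self {n : ℕ} {A : Matrix (Fin n) (Fin n) ℂ}
    (hA : A.PosSemidef) : hA.sqrt * hA.sqrt = A := by
  have hU : star (hA.1.eigenvectorUnitary : Matrix (Fin n) (Fin n) ℂ) *
      (hA.1.eigenvectorUnitary : Matrix (Fin n) (Fin n) ℂ) = 1 :=
    Matrix.mem_unitaryGroup_iff'.mp hA.1.eigenvectorUnitary.2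
  unfold Matrix.PosSemidef.sqrt
  conv_rhs => rw [hA.1.spectral_theorem, Unitary.conjStarAlgAut_apply]
  simp only [Matrix.mul_assoc]
  rw [← Matrix.mul_assoc (star _) _ (diagonal _ * _), hU, Matrix.one_mul,
    ← Matrix.mul_assoc (diagonal _) (diagonal _), Matrix.diagonal_mul_diagonal]
  congr 3
  funext i
  simp only [Function.comp_apply]
  rw [← RCLike.ofReal_mul, Real.mul_self_sqrt (hA.eigenvalues_nonneg i)]


set_option maxHeartbeats 1000000

namespace Heron

variable {n : ℕ}

def WeakMaj {n : ℕ} (x y : Fin n → ℝ) : Prop :=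
  ∀ s : Finset (Fin n), ∃ t : Finset (Fin n),
    t.card = s.card ∧ ∑ i ∈ s, x i ≤ ∑ i ∈ t, y i

def Maj {n : ℕ} (x y : Fin n → ℝ) : Prop :=
  WeakMaj x y ∧ ∑ i, x i = ∑ i, y i

lemma sandwich_posSemidef {S T : Matrix (Fin n) (Fin n) ℂ} (hS : S.IsHermitian)
    (hT : T.PosSemidef) : (S * T * S).PosSemidef := by
  have h := hT.mul_mul_conjTranspose_same S
  rwa [hS.eq] at h

noncomputable def geomMean {A B : Matrix (Fin n) (Fin n) ℂ}
    (hA : A.PosDef) (hB : B.PosDef) : Matrix (Fin n) (Fin n) ℂ :=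
  hA.posSemidef.sqrt *
    (sandwich_posSemidef hA.posSemidef.posSemidef_sqrt.isHermitian.inv
        hB.posSemidef).sqrt *
    hA.posSemidef.sqrt

lemma geomMean_posSemidef {A B : Matrix (Fin n) (Fin n) ℂ}
    (hA : A.PosDef) (hB : B.PosDef) : (geomMean hA hB).PosSemidef :=
  sandwich_posSemidef hA.posSemidef.posSemidef_sqrt.isHermitian
    (Matrix.PosSemidef.posSemidef_sqrt _)

noncomputable def specMean {A B : Matrix (Fin n) (Fin n) ℂ}
    (hA : A.PosDef) (hB : B.PosDef) : Matrix (Fin n) (Fin n) ℂ :=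
  (geomMean_posSemidef hA.inv hB).sqrt * A * (geomMean_posSemidef hA.inv hB).sqrt

def HasPosSpectrum (M : Matrix (Fin n) (Fin n) ℂ) : Prop :=
  ∀ z ∈ spectrum ℂ M, 0 < z.re ∧ z.im = 0

def IsPrincipalSqrt (M S : Matrix (Fin n) (Fin n) ℂ) : Prop :=
  S * S = M ∧ HasPosSpectrum S

noncomputable def absMat (Y : Matrix (Fin n) (Fin n) ℂ) : Matrix (Fin n) (Fin n) ℂ :=
  (Matrix.posSemidef_conjTranspose_mul_self Y).sqrt

noncomputable def posPart (H : Matrix (Fin n) (Fin n) ℂ) : Matrix (Fin n) (Fin n) ℂ :=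
  ((1 : ℂ) / 2) • (absMat H + H)

lemma smul_posSemidef {r : ℝ} (hr : 0 ≤ r) {A : Matrix (Fin n) (Fin n) ℂ}
    (hA : A.PosSemidef) : ((r : ℂ) • A).PosSemidef := by
  constructor
  · show ((r : ℂ) • A)ᴴ = _
    rw [conjTranspose_smul, hA.1.eq]
    congr 1
    simp [Complex.ext_iff]
  · exact (hA.smul (a := (r:ℂ)) (by exact_mod_cast Complex.zero_le_real.mpr hr)).2

lemma psd_diag_nonneg {A : Matrix (Fin n) (Fin n) ℂ} (hA : A.PosSemidef) (i : Fin n) :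
    0 ≤ A i i := by
  exact hA.diag_nonneg

lemma psd_trace_nonneg {A : Matrix (Fin n) (Fin n) ℂ} (hA : A.PosSemidef) :
    0 ≤ A.trace :=
  Finset.sum_nonneg fun i _ => psd_diag_nonneg hA i

lemma psd_trace_mul_nonneg {A B : Matrix (Fin n) (Fin n) ℂ} (hA : A.PosSemidef)
    (hB : B.PosSemidef) : 0 ≤ (A * B).trace := by
  have h1 : A * B = hA.sqrt * (hA.sqrt * B) := by
    rw [← Matrix.mul_assoc, hA.sqrt_mul_self]
  rw [h1, Matrix.trace_mul_comm, Matrix.mul_assoc]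
  have : (hA.sqrt * B * hA.sqrt).PosSemidef := by
    have := hB.mul_mul_conjTranspose_same hA.sqrt
    rwa [hA.posSemidef_sqrt.1.eq] at this
  exact psd_trace_nonneg (by rwa [Matrix.mul_assoc] at this)

lemma trace_eq_sum_eigen {A : Matrix (Fin n) (Fin n) ℂ} (hA : A.IsHermitian) :
    A.trace = ∑ i, (hA.eigenvalues i : ℂ) := by
  conv_lhs => rw [hA.spectral_theorem, Unitary.conjStarAlgAut_apply]
  rw [Matrix.trace_mul_cycle, Matrix.mem_unitaryGroup_iff'.mp hA.eigenvectorUnitary.2,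
    Matrix.one_mul, Matrix.trace_diagonal]
  rfl

lemma eigenvalues_congr {A B : Matrix (Fin n) (Fin n) ℂ} (h : A = B)
    (hA : A.IsHermitian) (hB : B.IsHermitian) : hA.eigenvalues = hB.eigenvalues := by
  subst h; rfl

lemma exists_top (lam : Fin n → ℝ) (k : ℕ) (hk : k ≤ n) :
    ∃ t : Finset (Fin n), t.card = k ∧ ∀ i ∈ t, ∀ j ∉ t, lam j ≤ lam i := by
  induction k with
  | zero => exact ⟨∅, rfl, by simp⟩
  | succ k ih =>
    obtain ⟨t, htc, ht⟩ := ih (Nat.le_of_succ_le hk)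
    have hcompl : tᶜ.Nonempty := by
      rw [← Finset.card_pos, Finset.card_compl, htc]
      simp only [Fintype.card_fin]
      omega
    obtain ⟨j₀, hj₀, hmax⟩ := Finset.exists_max_image tᶜ lam hcompl
    have hj₀t : j₀ ∉ t := Finset.mem_compl.mp hj₀
    refine ⟨insert j₀ t, by rw [Finset.card_insert_of_notMem hj₀t, htc], ?_⟩
    intro i hi j hj
    have hjt : j ∉ t := fun h => hj (Finset.mem_insert_of_mem h)
    rcases Finset.mem_insert.mp hi with rfl | hi
    · exact hmax j (Finset.mem_compl.mpr hjt)
    · exact ht i hi j hjt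

lemma sum_mul_le (lam cf : Fin n → ℝ) (hlam : ∀ i, 0 ≤ lam i)
    (h0 : ∀ i, 0 ≤ cf i) (h1 : ∀ i, cf i ≤ 1) (t : Finset (Fin n))
    (hsum : ∑ i, cf i ≤ t.card)
    (ht : ∀ i ∈ t, ∀ j ∉ t, lam j ≤ lam i) :
    ∑ i, lam i * cf i ≤ ∑ i ∈ t, lam i := by
  rcases t.eq_empty_or_nonempty with rfl | hne
  · simp only [Finset.card_empty, Nat.cast_zero] at hsum
    have hz : ∀ i ∈ Finset.univ, cf i = 0 :=
      (Finset.sum_eq_zero_iff_of_nonneg (fun i _ => h0 i)).mp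
        (le_antisymm hsum (Finset.sum_nonneg fun i _ => h0 i))
    simp only [Finset.sum_empty]
    calc ∑ i, lam i * cf i = ∑ i, lam i * 0 := by
          refine Finset.sum_congr rfl fun i hi => by rw [hz i hi]
      _ = 0 := by simp
      _ ≤ 0 := le_refl 0
  · obtain ⟨i₀, hi₀, hmin⟩ := Finset.exists_min_image t lam hne
    have hμ : 0 ≤ lam i₀ := hlam i₀
    have hsplit : ∑ i, lam i * cf i
        = ∑ i ∈ t, lam i * cf i + ∑ i ∈ tᶜ, lam i * cf i :=
      (Finset.sum_add_sum_compl t _).symm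
    have hsplitc : ∑ i ∈ t, cf i + ∑ i ∈ tᶜ, cf i = ∑ i, cf i :=
      Finset.sum_add_sum_compl t _
    have hb1 : ∑ i ∈ tᶜ, lam i * cf i ≤ lam i₀ * ∑ i ∈ tᶜ, cf i := by
      rw [Finset.mul_sum]
      refine Finset.sum_le_sum fun j hj => ?_
      exact mul_le_mul_of_nonneg_right (ht i₀ hi₀ j (Finset.mem_compl.mp hj)) (h0 j)
    have hb2 : ∑ i ∈ tᶜ, cf i ≤ (t.card : ℝ) - ∑ i ∈ t, cf i := by linarith
    have hb3 : lam i₀ * ∑ i ∈ tᶜ, cf i ≤ lam i₀ * ((t.card : ℝ) - ∑ i ∈ t, cf i) :=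
      mul_le_mul_of_nonneg_left hb2 hμ
    have hb4 : lam i₀ * ((t.card : ℝ) - ∑ i ∈ t, cf i) = ∑ i ∈ t, lam i₀ * (1 - cf i) := by
      have he : ∑ i ∈ t, lam i₀ * (1 - cf i) = ∑ i ∈ t, (lam i₀ - lam i₀ * cf i) :=
        Finset.sum_congr rfl fun i _ => by ring
      rw [he, Finset.sum_sub_distrib, Finset.sum_const, nsmul_eq_mul, ← Finset.mul_sum]
      ring
    have hb5 : ∑ i ∈ t, lam i₀ * (1 - cf i) ≤ ∑ i ∈ t, lam i * (1 - cf i) := by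
      refine Finset.sum_le_sum fun i hi => ?_
      exact mul_le_mul_of_nonneg_right (hmin i hi) (by linarith [h1 i])
    have hb6 : ∑ i ∈ t, lam i * cf i + ∑ i ∈ t, lam i * (1 - cf i) = ∑ i ∈ t, lam i := by
      rw [← Finset.sum_add_distrib]
      exact Finset.sum_congr rfl fun i _ => by ring
    linarith


lemma kyfan {Tm Sm : Matrix (Fin n) (Fin n) ℂ} (hT : Tm.IsHermitian)
    (hS : Sm.IsHermitian) (hSpsd : Sm.PosSemidef)
    (K₁ K₂ K₃ : Matrix (Fin n) (Fin n) ℂ) (w₁ w₂ w₃ : ℝ)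
    (hw₁ : 0 ≤ w₁) (hw₂ : 0 ≤ w₂) (hw₃ : 0 ≤ w₃)
    (hK₁ : K₁.IsHermitian) (hK₂ : K₂.IsHermitian) (hK₃ : K₃.IsHermitian)
    (hdec : Tm = (w₁:ℂ) • (K₁*Sm*K₁) + (w₂:ℂ) • (K₂*Sm*K₂) + (w₃:ℂ) • (K₃*Sm*K₃))
    (hZ : (1 - ((w₁:ℂ) • (K₁*K₁) + (w₂:ℂ) • (K₂*K₂) + (w₃:ℂ) • (K₃*K₃))).PosSemidef) :
    WeakMaj hT.eigenvalues hS.eigenvalues := by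
  intro s
  set k := s.card with hk
  obtain ⟨t, htc, ht⟩ := exists_top hS.eigenvalues k
    (by simpa using s.card_le_univ)
  refine ⟨t, htc, ?_⟩
  -- eigen-unitary of T
  set V : Matrix (Fin n) (Fin n) ℂ := (hT.eigenvectorUnitary : Matrix (Fin n) (Fin n) ℂ)
    with hVdef
  have hV : V * star V = 1 := Matrix.mem_unitaryGroup_iff.mp hT.eigenvectorUnitary.2
  have hV' : star V * V = 1 := Matrix.mem_unitaryGroup_iff'.mp hT.eigenvectorUnitary.2
  have hVcancel : ∀ X : Matrix (Fin n) (Fin n) ℂ, star V * (V * X) = X := fun X => by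
    rw [← Matrix.mul_assoc, hV', Matrix.one_mul]
  -- projection P
  set d : Fin n → ℂ := fun i => if i ∈ s then 1 else 0 with hd
  set P : Matrix (Fin n) (Fin n) ℂ := V * diagonal d * star V with hP
  have hdnn : (0 : Fin n → ℂ) ≤ d := by
    intro i
    simp only [hd, Pi.zero_apply]
    split <;> simp
  have hDpsd : (diagonal d).PosSemidef := PosSemidef.diagonal hdnn
  have hPpsd : P.PosSemidef := by
    have := hDpsd.mul_mul_conjTranspose_same V
    rwa [← Matrix.star_eq_conjTranspose] at this
  have hD1 : ((1 : Matrix (Fin n) (Fin n) ℂ) - diagonal d).PosSemidef := by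
    have h1 : (1 : Matrix (Fin n) (Fin n) ℂ) - diagonal d = diagonal (fun i => 1 - d i) := by
      rw [← Matrix.diagonal_one, Matrix.diagonal_sub]
    rw [h1]
    refine PosSemidef.diagonal ?_
    intro i
    simp only [hd, Pi.zero_apply]
    split <;> simp
  have hP1 : ((1 : Matrix (Fin n) (Fin n) ℂ) - P).PosSemidef := by
    have h1 : (1 : Matrix (Fin n) (Fin n) ℂ) - P = V * (1 - diagonal d) * star V := by
      rw [Matrix.mul_sub, Matrix.sub_mul, Matrix.mul_one, hV, hP]
    rw [h1]
    have := hD1.mul_mul_conjTranspose_same V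
    rwa [← Matrix.star_eq_conjTranspose] at this
  have hsumd : ∑ i, d i = (k : ℂ) := by
    simp only [hd]
    rw [Finset.sum_ite_mem, Finset.univ_inter, Finset.sum_const, nsmul_eq_mul, mul_one, hk]
  have htrP : P.trace = (k : ℂ) := by
    rw [hP, Matrix.trace_mul_cycle, hV', Matrix.one_mul, Matrix.trace_diagonal, hsumd]
  -- trace (P * Tm) = partial eigenvalue sum
  set ΛT : Fin n → ℂ := RCLike.ofReal ∘ hT.eigenvalues with hΛT
  have htrPT : (P * Tm).trace = ∑ i ∈ s, (hT.eigenvalues i : ℂ) := by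
    have e : P * Tm = V * (diagonal d * diagonal ΛT * star V) := by
      conv_lhs => rw [hT.spectral_theorem, Unitary.conjStarAlgAut_apply]
      simp only [hP, hΛT, Matrix.mul_assoc]
      rw [hVcancel]
    rw [e, Matrix.trace_mul_comm, Matrix.mul_assoc, hV', Matrix.mul_one,
      Matrix.diagonal_mul_diagonal, Matrix.trace_diagonal]
    simp only [hd, hΛT, Function.comp_apply, ite_mul, one_mul, zero_mul]
    rw [Finset.sum_ite_mem, Finset.univ_inter]
    rfl
  -- the operator Q
  set Q : Matrix (Fin n) (Fin n) ℂ :=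
    (w₁:ℂ) • (K₁*P*K₁) + (w₂:ℂ) • (K₂*P*K₂) + (w₃:ℂ) • (K₃*P*K₃) with hQ
  have hQpsd : Q.PosSemidef :=
    ((smul_posSemidef hw₁ (sandwich_posSemidef hK₁ hPpsd)).add
      (smul_posSemidef hw₂ (sandwich_posSemidef hK₂ hPpsd))).add
      (smul_posSemidef hw₃ (sandwich_posSemidef hK₃ hPpsd))
  set Z : Matrix (Fin n) (Fin n) ℂ :=
    (w₁:ℂ) • (K₁*K₁) + (w₂:ℂ) • (K₂*K₂) + (w₃:ℂ) • (K₃*K₃) with hZdef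
  have hsand : ∀ K : Matrix (Fin n) (Fin n) ℂ,
      (w : ℝ) → (w:ℂ) • (K*(1-P)*K) = (w:ℂ) • (K*K) - (w:ℂ) • (K*P*K) := by
    intro K w
    rw [Matrix.mul_sub, Matrix.sub_mul, Matrix.mul_one, smul_sub]
  have h1Q : ((1 : Matrix (Fin n) (Fin n) ℂ) - Q).PosSemidef := by
    have e : (1 : Matrix (Fin n) (Fin n) ℂ) - Q = (1 - Z) +
        ((w₁:ℂ) • (K₁*(1-P)*K₁) + (w₂:ℂ) • (K₂*(1-P)*K₂) + (w₃:ℂ) • (K₃*(1-P)*K₃)) := by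
      rw [hsand K₁ w₁, hsand K₂ w₂, hsand K₃ w₃, hQ, hZdef]
      abel
    rw [e]
    exact hZ.add (((smul_posSemidef hw₁ (sandwich_posSemidef hK₁ hP1)).add
      (smul_posSemidef hw₂ (sandwich_posSemidef hK₂ hP1))).add
      (smul_posSemidef hw₃ (sandwich_posSemidef hK₃ hP1)))
  -- trace of Q
  have hcyc : ∀ K : Matrix (Fin n) (Fin n) ℂ, (K*P*K).trace = (P*(K*K)).trace := by
    intro K
    rw [Matrix.trace_mul_comm (K*P) K, ← Matrix.mul_assoc K K P,
      Matrix.trace_mul_comm (K*K) P]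
  have htrQ : Q.trace = (k : ℂ) - (P * (1 - Z)).trace := by
    have e1 : (P * (1 - Z)).trace = P.trace - (P * Z).trace := by
      rw [Matrix.mul_sub, Matrix.mul_one, Matrix.trace_sub]
    have e2 : (P * Z).trace = Q.trace := by
      rw [hZdef, hQ]
      simp only [Matrix.mul_add, Matrix.trace_add, Matrix.trace_smul, mul_smul_comm,
        smul_mul_assoc]
      rw [hcyc K₁, hcyc K₂, hcyc K₃]
    rw [e1, e2, htrP]
    ring
  -- eigen-unitary of S
  set W : Matrix (Fin n) (Fin n) ℂ := (hS.eigenvectorUnitary : Matrix (Fin n) (Fin n) ℂ)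
    with hWdef
  have hW : W * star W = 1 := Matrix.mem_unitaryGroup_iff.mp hS.eigenvectorUnitary.2
  have hW' : star W * W = 1 := Matrix.mem_unitaryGroup_iff'.mp hS.eigenvectorUnitary.2
  set M : Matrix (Fin n) (Fin n) ℂ := star W * Q * W with hM
  have hMpsd : M.PosSemidef := by
    have := hQpsd.conjTranspose_mul_mul_same W
    rwa [← Matrix.star_eq_conjTranspose] at this
  have hM1 : ((1 : Matrix (Fin n) (Fin n) ℂ) - M).PosSemidef := by
    have e : (1 : Matrix (Fin n) (Fin n) ℂ) - M = star W * (1 - Q) * W := by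
      rw [Matrix.mul_sub, Matrix.sub_mul, Matrix.mul_one, hW', hM]
    rw [e]
    have := h1Q.conjTranspose_mul_mul_same W
    rwa [← Matrix.star_eq_conjTranspose] at this
  have htrM : M.trace = Q.trace := by
    rw [hM, Matrix.trace_mul_cycle, hW, Matrix.one_mul]
  -- trace (Q * Sm)
  set ΛS : Fin n → ℂ := RCLike.ofReal ∘ hS.eigenvalues with hΛS
  have htrQS : (Q * Sm).trace = ∑ i, M i i * ΛS i := by
    have e : Q * Sm = Q * W * diagonal ΛS * star W := by
      conv_lhs => rw [hS.spectral_theorem, Unitary.conjStarAlgAut_apply]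
      simp only [hΛS, Matrix.mul_assoc]
      rfl
    calc (Q * Sm).trace = (Q * W * diagonal ΛS * star W).trace := by rw [e]
      _ = (star W * (Q * W * diagonal ΛS)).trace := Matrix.trace_mul_comm _ _
      _ = (M * diagonal ΛS).trace := by rw [hM]; simp only [Matrix.mul_assoc]
      _ = ∑ i, M i i * ΛS i := by
          simp [Matrix.trace, Matrix.diag, Matrix.mul_diagonal]
  -- trace (P * Tm) = trace (Q * Sm)
  have hper : ∀ K : Matrix (Fin n) (Fin n) ℂ, ((K*P*K)*Sm).trace = (P*(K*Sm*K)).trace := by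
    intro K
    rw [show (K*P*K)*Sm = K*(P*(K*Sm)) by simp only [Matrix.mul_assoc],
      Matrix.trace_mul_comm,
      show P*(K*Sm)*K = P*(K*Sm*K) by simp only [Matrix.mul_assoc]]
  have hPTQS : (P * Tm).trace = (Q * Sm).trace := by
    conv_lhs => rw [hdec]
    rw [hQ]
    simp only [Matrix.mul_add, Matrix.add_mul, mul_smul_comm, smul_mul_assoc,
      Matrix.trace_add, Matrix.trace_smul]
    rw [hper K₁, hper K₂, hper K₃]
  -- pass to real parts
  set cf : Fin n → ℝ := fun i => (M i i).re with hcf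
  have hMdiag : ∀ i, 0 ≤ M i i := fun i => psd_diag_nonneg hMpsd i
  have hcf0 : ∀ i, 0 ≤ cf i := fun i => (Complex.nonneg_iff.mp (hMdiag i)).1
  have hcfim : ∀ i, (M i i).im = 0 := fun i => ((Complex.nonneg_iff.mp (hMdiag i)).2).symm
  have hcf1 : ∀ i, cf i ≤ 1 := by
    intro i
    have h := psd_diag_nonneg hM1 i
    have e : ((1 : Matrix (Fin n) (Fin n) ℂ) - M) i i = 1 - M i i := by
      simp [Matrix.sub_apply, Matrix.one_apply_eq]
    rw [e] at h
    have := (Complex.nonneg_iff.mp h).1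
    simp only [Complex.sub_re, Complex.one_re] at this
    linarith
  have hsumcf : ∑ i, cf i ≤ (k : ℝ) := by
    have h1 : (M.trace).re = ∑ i, cf i := by
      rw [Matrix.trace]
      simp [Complex.re_sum, hcf]
    have h2 : 0 ≤ ((P * (1 - Z)).trace).re :=
      (Complex.nonneg_iff.mp (psd_trace_mul_nonneg hPpsd hZ)).1
    have h3 : (Q.trace).re = (k : ℝ) - ((P * (1 - Z)).trace).re := by
      rw [htrQ]
      simp
    rw [← h1, htrM, h3]
    linarith
  -- final chain
  have hre1 : ((P * Tm).trace).re = ∑ i ∈ s, hT.eigenvalues i := by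
    rw [htrPT, Complex.re_sum]
    simp
  have hre2 : ((Q * Sm).trace).re = ∑ i, hS.eigenvalues i * cf i := by
    rw [htrQS, Complex.re_sum]
    refine Finset.sum_congr rfl fun i _ => ?_
    simp only [hΛS, Function.comp_apply, Complex.mul_re, hcfim, hcf]
    rw [show ((RCLike.ofReal (hS.eigenvalues i) : ℂ)).re = hS.eigenvalues i from
        Complex.ofReal_re _,
      show ((RCLike.ofReal (hS.eigenvalues i) : ℂ)).im = 0 from Complex.ofReal_im _]
    ring
  have hlamnn : ∀ i, 0 ≤ hS.eigenvalues i := fun i => hSpsd.eigenvalues_nonneg i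
  have hfinal := sum_mul_le hS.eigenvalues cf hlamnn hcf0 hcf1 t (by rw [htc]; exact hsumcf) ht
  calc ∑ i ∈ s, hT.eigenvalues i = ((P * Tm).trace).re := hre1.symm
    _ = ((Q * Sm).trace).re := by rw [hPTQS]
    _ = ∑ i, hS.eigenvalues i * cf i := hre2
    _ ≤ ∑ i ∈ t, hS.eigenvalues i := hfinal


lemma smul_posDef {r : ℝ} (hr : 0 < r) {A : Matrix (Fin n) (Fin n) ℂ}
    (hA : A.PosDef) : ((r : ℂ) • A).PosDef := by
  constructor
  · show ((r : ℂ) • A)ᴴ = _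
    rw [conjTranspose_smul, hA.1.eq]
    congr 1
    simp [Complex.ext_iff]
  · exact (hA.smul (a := (r:ℂ)) (by exact_mod_cast Complex.zero_lt_real.mpr hr)).2


/-- the abstract Schur-multiplier reduction:
`a²R⁻¹CR⁻¹ + b²RCR + cC ≺_w (aR⁻¹ + bR) C (aR⁻¹ + bR)` for `0 ≤ c ≤ 2ab`,
with majorization at `c = 2ab`. -/
theorem abstract_schur_reduction {n : ℕ} (R C : Matrix (Fin n) (Fin n) ℂ)
    (hR : R.PosDef) (hC : C.PosDef)
    (a b c : ℝ) (ha : 0 ≤ a) (hb : 0 ≤ b) (hc0 : 0 ≤ c) (hc : c ≤ 2 * a * b)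
    (hT : (((a : ℂ) ^ 2) • (R⁻¹ * C * R⁻¹) + ((b : ℂ) ^ 2) • (R * C * R)
        + (c : ℂ) • C).IsHermitian)
    (hS : ((((a : ℂ) • R⁻¹ + (b : ℂ) • R) * C
        * ((a : ℂ) • R⁻¹ + (b : ℂ) • R))).IsHermitian) :
    WeakMaj hT.eigenvalues hS.eigenvalues ∧
      (c = 2 * a * b → Maj hT.eigenvalues hS.eigenvalues) := by
  have hRu : IsUnit R.det := isUnit_iff_ne_zero.mpr hR.det_pos.ne'
  have hRR : R * R⁻¹ = 1 := Matrix.mul_nonsing_inv R hRu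
  have hRR' : R⁻¹ * R = 1 := Matrix.nonsing_inv_mul R hRu
  set X : Matrix (Fin n) (Fin n) ℂ := (a:ℂ) • R⁻¹ + (b:ℂ) • R with hX
  have hRiherm : R⁻¹.IsHermitian := hR.isHermitian.inv
  have hXherm : X.IsHermitian := by
    show Xᴴ = X
    rw [hX, conjTranspose_add, conjTranspose_smul, conjTranspose_smul,
      hRiherm.eq, hR.isHermitian.eq]
    congr 1 <;> congr 1 <;> simp [Complex.ext_iff]
  have hSpsd : (X * C * X).PosSemidef := sandwich_posSemidef hXherm hC.posSemidef
  -- trace equality in the `c = 2ab` case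
  have htrace : c = 2 * a * b →
      (((a : ℂ) ^ 2) • (R⁻¹ * C * R⁻¹) + ((b : ℂ) ^ 2) • (R * C * R)
        + (c : ℂ) • C).trace = (X * C * X).trace := by
    intro hc2
    have e1 : (R⁻¹ * C * R).trace = C.trace := by
      rw [Matrix.trace_mul_comm (R⁻¹ * C) R, ← Matrix.mul_assoc, hRR, Matrix.one_mul]
    have e2 : (R * C * R⁻¹).trace = C.trace := by
      rw [Matrix.trace_mul_comm (R * C) R⁻¹, ← Matrix.mul_assoc, hRR', Matrix.one_mul]
    have eX : X * C * X = (a:ℂ) • ((a:ℂ) • (R⁻¹ * C * R⁻¹) + (b:ℂ) • (R⁻¹ * C * R))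
        + (b:ℂ) • ((a:ℂ) • (R * C * R⁻¹) + (b:ℂ) • (R * C * R)) := by
      rw [hX]
      simp only [Matrix.add_mul, Matrix.mul_add, smul_mul_assoc, mul_smul_comm, smul_add]
      module
    rw [eX]
    simp only [Matrix.trace_add, Matrix.trace_smul, e1, e2, hc2, smul_eq_mul]
    push_cast
    ring
  have hsumeq : c = 2 * a * b →
      ∑ i, hT.eigenvalues i = ∑ i, hS.eigenvalues i := by
    intro hc2
    have h1 := trace_eq_sum_eigen hT
    have h2 := trace_eq_sum_eigen hS
    have h3 := htrace hc2
    rw [h1, h2] at h3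
    exact_mod_cast h3
  by_cases hab : a = 0 ∧ b = 0
  · obtain ⟨rfl, rfl⟩ := hab
    have hcz : c = 0 := le_antisymm (by simpa using hc) hc0
    subst hcz
    have hTS : (((0 : ℝ) : ℂ) ^ 2) • (R⁻¹ * C * R⁻¹) + (((0 : ℝ) : ℂ) ^ 2) • (R * C * R)
        + ((0 : ℝ) : ℂ) • C = X * C * X := by
      rw [hX]
      push_cast
      simp
    have heig := eigenvalues_congr hTS hT hS
    have hweak : WeakMaj hT.eigenvalues hS.eigenvalues := by
      intro s
      exact ⟨s, rfl, by rw [heig]⟩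
    exact ⟨hweak, fun _ => ⟨hweak, by rw [heig]⟩⟩
  · -- X is positive definite
    have hXpd : X.PosDef := by
      rcases eq_or_lt_of_le ha with haz | hap
      · have hbp : 0 < b := by
          rcases eq_or_lt_of_le hb with hbz | hbp
          · exact absurd ⟨haz.symm, hbz.symm⟩ hab
          · exact hbp
        rw [hX, ← haz]
        simpa using (smul_posDef hbp hR).posSemidef_add
          (smul_posSemidef (le_refl (0:ℝ)) hR.inv.posSemidef)
      · exact (smul_posDef hap hR.inv).add_posSemidef (smul_posSemidef hb hR.posSemidef)
    have hXu : IsUnit X.det := isUnit_iff_ne_zero.mpr hXpd.det_pos.ne'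
    have hXX : X * X⁻¹ = 1 := Matrix.mul_nonsing_inv X hXu
    have hXX' : X⁻¹ * X = 1 := Matrix.nonsing_inv_mul X hXu
    have hXiherm : X⁻¹.IsHermitian := hXherm.inv
    have hXR : X * R = R * X := by
      rw [hX]
      simp only [Matrix.add_mul, Matrix.mul_add, smul_mul_assoc, mul_smul_comm, hRR, hRR']
    have hXRi : X * R⁻¹ = R⁻¹ * X := by
      rw [hX]
      simp only [Matrix.add_mul, Matrix.mul_add, smul_mul_assoc, mul_smul_comm, hRR, hRR']
    have hXiR : X⁻¹ * R = R * X⁻¹ := by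
      calc X⁻¹ * R = X⁻¹ * R * (X * X⁻¹) := by rw [hXX, Matrix.mul_one]
        _ = X⁻¹ * (R * X) * X⁻¹ := by simp only [Matrix.mul_assoc]
        _ = X⁻¹ * (X * R) * X⁻¹ := by rw [← hXR]
        _ = R * X⁻¹ := by rw [← Matrix.mul_assoc, hXX', Matrix.one_mul]
    have hXiRi : X⁻¹ * R⁻¹ = R⁻¹ * X⁻¹ := by
      calc X⁻¹ * R⁻¹ = X⁻¹ * R⁻¹ * (X * X⁻¹) := by rw [hXX, Matrix.mul_one]
        _ = X⁻¹ * (R⁻¹ * X) * X⁻¹ := by simp only [Matrix.mul_assoc]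
        _ = X⁻¹ * (X * R⁻¹) * X⁻¹ := by rw [← hXRi]
        _ = R⁻¹ * X⁻¹ := by rw [← Matrix.mul_assoc, hXX', Matrix.one_mul]
    have hK₁ : (X⁻¹ * R⁻¹).IsHermitian := by
      show (X⁻¹ * R⁻¹)ᴴ = X⁻¹ * R⁻¹
      rw [conjTranspose_mul, hRiherm.eq, hXiherm.eq, ← hXiRi]
    have hK₂ : (X⁻¹ * R).IsHermitian := by
      show (X⁻¹ * R)ᴴ = X⁻¹ * R
      rw [conjTranspose_mul, hR.isHermitian.eq, hXiherm.eq, ← hXiR]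
    have hK₃ : (X⁻¹ : Matrix (Fin n) (Fin n) ℂ).IsHermitian := hXiherm
    -- key products
    have hKX₁ : (X⁻¹ * R⁻¹) * X = R⁻¹ := by
      rw [Matrix.mul_assoc, ← hXRi, ← Matrix.mul_assoc, hXX', Matrix.one_mul]
    have hXK₁ : X * (X⁻¹ * R⁻¹) = R⁻¹ := by
      rw [← Matrix.mul_assoc, hXX, Matrix.one_mul]
    have hKX₂ : (X⁻¹ * R) * X = R := by
      rw [Matrix.mul_assoc, ← hXR, ← Matrix.mul_assoc, hXX', Matrix.one_mul]
    have hXK₂ : X * (X⁻¹ * R) = R := by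
      rw [← Matrix.mul_assoc, hXX, Matrix.one_mul]
    have hsw : ∀ K Y : Matrix (Fin n) (Fin n) ℂ, K * X = Y → X * K = Y →
        K * (X * C * X) * K = Y * C * Y := by
      intro K Y h1 h2
      calc K * (X * C * X) * K = (K * X) * (C * (X * K)) := by
            simp only [Matrix.mul_assoc]
        _ = Y * C * Y := by rw [h1, h2, Matrix.mul_assoc]
    have hdec : ((a : ℂ) ^ 2) • (R⁻¹ * C * R⁻¹) + ((b : ℂ) ^ 2) • (R * C * R) + (c : ℂ) • C
        = ((a^2 : ℝ) : ℂ) • ((X⁻¹ * R⁻¹) * (X * C * X) * (X⁻¹ * R⁻¹))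
          + ((b^2 : ℝ) : ℂ) • ((X⁻¹ * R) * (X * C * X) * (X⁻¹ * R))
          + (c : ℂ) • (X⁻¹ * (X * C * X) * X⁻¹) := by
      rw [hsw _ _ hKX₁ hXK₁, hsw _ _ hKX₂ hXK₂, hsw _ _ hXX' hXX]
      rw [Matrix.one_mul, Matrix.mul_one]
      push_cast
      rfl
    -- the contraction condition
    have hXsq : X * X = ((a^2 : ℝ) : ℂ) • (R⁻¹ * R⁻¹) + (((2:ℝ)*a*b : ℝ) : ℂ) • 1
        + ((b^2 : ℝ) : ℂ) • (R * R) := by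
      rw [hX]
      simp only [Matrix.add_mul, Matrix.mul_add, smul_mul_assoc, mul_smul_comm, hRR, hRR',
        smul_smul]
      push_cast
      module
    have hKK₁ : (X⁻¹ * R⁻¹) * (X⁻¹ * R⁻¹) = X⁻¹ * (R⁻¹ * R⁻¹) * X⁻¹ := by
      nth_rewrite 2 [hXiRi]
      simp only [Matrix.mul_assoc]
    have hKK₂ : (X⁻¹ * R) * (X⁻¹ * R) = X⁻¹ * (R * R) * X⁻¹ := by
      nth_rewrite 2 [hXiR]
      simp only [Matrix.mul_assoc]
    have hZeq : (1 : Matrix (Fin n) (Fin n) ℂ)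
        - (((a^2 : ℝ) : ℂ) • ((X⁻¹ * R⁻¹) * (X⁻¹ * R⁻¹))
          + ((b^2 : ℝ) : ℂ) • ((X⁻¹ * R) * (X⁻¹ * R))
          + (c : ℂ) • (X⁻¹ * X⁻¹))
        = (((2*a*b - c : ℝ)) : ℂ) • (X⁻¹ * X⁻¹) := by
      have hinner : ((a^2 : ℝ) : ℂ) • (R⁻¹ * R⁻¹) + ((b^2 : ℝ) : ℂ) • (R * R) + (c : ℂ) • 1
          = X * X - (((2*a*b - c : ℝ)) : ℂ) • 1 := by
        rw [hXsq]
        push_cast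
        module
      have hZ2 : ((a^2 : ℝ) : ℂ) • ((X⁻¹ * R⁻¹) * (X⁻¹ * R⁻¹))
          + ((b^2 : ℝ) : ℂ) • ((X⁻¹ * R) * (X⁻¹ * R)) + (c : ℂ) • (X⁻¹ * X⁻¹)
          = X⁻¹ * (((a^2 : ℝ) : ℂ) • (R⁻¹ * R⁻¹) + ((b^2 : ℝ) : ℂ) • (R * R)
              + (c : ℂ) • 1) * X⁻¹ := by
        rw [hKK₁, hKK₂]
        simp only [Matrix.mul_add, Matrix.add_mul, mul_smul_comm, smul_mul_assoc,
          Matrix.mul_one]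
      have hXXX : X⁻¹ * (X * X) * X⁻¹ = 1 := by
        rw [← Matrix.mul_assoc, hXX', Matrix.one_mul, hXX]
      rw [hZ2, hinner, Matrix.mul_sub, Matrix.sub_mul, hXXX, mul_smul_comm, smul_mul_assoc,
        Matrix.mul_one]
      push_cast
      module
    have hXiXi : (X⁻¹ * X⁻¹).PosSemidef := by
      have h := sandwich_posSemidef hXiherm (Matrix.PosSemidef.one)
      rwa [Matrix.mul_one] at h
    have hZpsd : ((1 : Matrix (Fin n) (Fin n) ℂ)
        - (((a^2 : ℝ) : ℂ) • ((X⁻¹ * R⁻¹) * (X⁻¹ * R⁻¹))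
          + ((b^2 : ℝ) : ℂ) • ((X⁻¹ * R) * (X⁻¹ * R))
          + (c : ℂ) • (X⁻¹ * X⁻¹))).PosSemidef := by
      rw [hZeq]
      exact smul_posSemidef (by linarith) hXiXi
    have hdec' : ((a : ℂ) ^ 2) • (R⁻¹ * C * R⁻¹) + ((b : ℂ) ^ 2) • (R * C * R) + (c : ℂ) • C
        = ((a^2 : ℝ) : ℂ) • ((X⁻¹ * R⁻¹) * (X * C * X) * (X⁻¹ * R⁻¹))
          + ((b^2 : ℝ) : ℂ) • ((X⁻¹ * R) * (X * C * X) * (X⁻¹ * R))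
          + ((c : ℝ) : ℂ) • (X⁻¹ * (X * C * X) * X⁻¹) := hdec
    have hweak : WeakMaj hT.eigenvalues hS.eigenvalues :=
      kyfan hT hS hSpsd (X⁻¹ * R⁻¹) (X⁻¹ * R) X⁻¹ (a^2) (b^2) c
        (sq_nonneg a) (sq_nonneg b) hc0 hK₁ hK₂ hK₃ hdec' hZpsd
    exact ⟨hweak, fun hc2 => ⟨hweak, hsumeq hc2⟩⟩

end Heron
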